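/- Let (X, P) be a probability space, let (Ω, F, ℙ) be a probability space, let K : X × X → ℝ be a function, and let x₁, …, x_n : Ω → X be random points such that each section x ↦ K(x, x_i(ω)) belongs to L²(P) for ℙ-almost every ω. Let φ₁, …, φ_N be an orthonormal family in L²(P), and for each i let W(ω) denote the span of the functions K(·, x₁(ω)), …, K(·, x_n(ω)) in L²(P), assuming ω ↦ inf_{g ∈ W(ω)} ‖g − φ_i‖²_{L²(P)} is measurable for each i. If (1/N) · Σ_{i=1}^N E_ω[ inf_{g ∈ W(ω)} ‖g − φ_i‖²_{L²(P)} ] ≤ ε, then n ≥ (1 − ε) · N. -/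

import Mathlib

open Finset MeasureTheory
open scoped RealInnerProductSpace
set_option synthInstance.maxHeartbeats 1000000
set_option maxHeartbeats 1000000

private lemma aux_det {E : Type*} [NormedAddCommGroup E] [InnerProductSpace ℝ E]
    (W : Submodule ℝ E) [W.HasOrthogonalProjection] [FiniteDimensional ℝ W]
    {n N : ℕ} (hd : Module.finrank ℝ W ≤ n)
    (φ : Fin N → E) (hφ : Orthonormal ℝ φ) :
    (N : ℝ) - n ≤ ∑ i, ⨅ g : W, ‖(g : E) - φ i‖ ^ 2 := by
  set P := W.orthogonalProjectionOnto
  have key : ∀ i, 1 - ‖(P (φ i) : E)‖ ^ 2 ≤ ⨅ g : W, ‖(g : E) - φ i‖ ^ 2 := by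
    intro i
    apply le_ciInf
    intro g
    have h1 : ‖φ i‖ ^ 2 = ‖P (φ i)‖ ^ 2 + ‖Wᗮ.orthogonalProjectionOnto (φ i)‖ ^ 2 :=
      Submodule.norm_sq_eq_add_norm_sq_projection _ _
    have h2 : (Wᗮ.orthogonalProjectionOnto (φ i) : E) = φ i - P (φ i) :=
      Submodule.starProjection_orthogonal_val (K := W) _
    have h3 : ‖φ i - (P (φ i) : E)‖ ≤ ‖φ i - g‖ := by
      rw [show ((P (φ i) : W) : E) = W.starProjection (φ i) from rfl, Submodule.starProjection_minimal]
      exact ciInf_le ⟨0, fun y => by rintro ⟨z, rfl⟩; exact norm_nonneg _⟩ g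
    have h4 : ‖φ i‖ = 1 := hφ.1 i
    have h5 : ‖(g : E) - φ i‖ = ‖φ i - g‖ := norm_sub_rev _ _
    have h7 : ‖Wᗮ.orthogonalProjectionOnto (φ i)‖ = ‖φ i - (P (φ i) : E)‖ := by
      rw [← Submodule.norm_coe, h2]
    have h8 : ‖(P (φ i) : E)‖ = ‖P (φ i)‖ := Submodule.norm_coe _
    have h9 : ‖φ i - (P (φ i) : E)‖ ^ 2 ≤ ‖φ i - (g : E)‖ ^ 2 :=
      pow_le_pow_left₀ (norm_nonneg _) h3 2
    rw [h5, h8]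
    rw [h7] at h1
    nlinarith [h1, h4, h9]
  calc (N : ℝ) - n ≤ ∑ i, (1 - ‖(P (φ i) : E)‖ ^ 2) := by
        rw [Finset.sum_sub_distrib, Finset.sum_const, card_univ, Fintype.card_fin, nsmul_eq_mul,
          mul_one]
        have bessel : ∑ i, ‖(P (φ i) : E)‖ ^ 2 ≤ (n : ℝ) := by
          set d := Module.finrank ℝ W
          let b := stdOrthonormalBasis ℝ W
          have hnorm : ∀ i, ‖(P (φ i) : E)‖ ^ 2 = ∑ k, ‖b.repr (P (φ i)) k‖ ^ 2 := by
            intro i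
            have h7 : ‖(P (φ i) : E)‖ = ‖P (φ i)‖ := rfl
            rw [h7, ← b.repr.norm_map (P (φ i)), EuclideanSpace.norm_eq,
              Real.sq_sqrt (by positivity)]
          have hinner : ∀ i k, b.repr (P (φ i)) k = ⟪((b k : W) : E), φ i⟫ := by
            intro i k
            rw [b.repr_apply_apply, Submodule.inner_orthogonalProjectionOnto_eq_of_mem_left]
          calc ∑ i, ‖(P (φ i) : E)‖ ^ 2 = ∑ k, ∑ i : Fin N, ‖⟪((b k : W) : E), φ i⟫‖ ^ 2 := by
                rw [Finset.sum_comm]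
                exact Finset.sum_congr rfl fun i _ => by
                  rw [hnorm i]; exact Finset.sum_congr rfl fun k _ => by rw [hinner]
            _ ≤ ∑ k : Fin d, ‖((b k : W) : E)‖ ^ 2 := by
                refine Finset.sum_le_sum fun k _ => ?_
                have := hφ.sum_inner_products_le (x := ((b k : W) : E)) (s := Finset.univ)
                simpa [real_inner_comm] using this
            _ ≤ (n : ℝ) := by
                have hb : ∀ k : Fin d, ‖((b k : W) : E)‖ = 1 := fun k => by
                  rw [Submodule.norm_coe]; exact b.orthonormal.1 k
                simp only [hb, one_pow, Finset.sum_const, card_univ, Fintype.card_fin,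
                  nsmul_eq_mul, mul_one]
                exact_mod_cast hd
        linarith
    _ ≤ ∑ i, ⨅ g : W, ‖(g : E) - φ i‖ ^ 2 := Finset.sum_le_sum fun i _ => key i

/-- **Sample size lower bound for kernel methods with random training inputs.**
Let `P` be a probability measure on `X`, let `x 1, …, x n : Ω → X` be random
points on a probability space `(Ω, μ)` such that for `μ`-a.e. `ω` each section
`x ↦ K x (xs j ω)` lies in `L²(P)`, and let `φ 1, …, φ N` be an orthonormal
family in `L²(P)`.  Let `W ω` be the span in `L²(P)` of the `n` functions
`K (·, xs j ω)`, and assume each `ω ↦ inf_{g ∈ W ω} ‖g - φ i‖²` is measurable.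
If `(1/N) ∑ i, E_ω[inf_{g ∈ W ω} ‖g - φ i‖²] ≤ ε`, then `n ≥ (1 - ε) N`. -/
theorem kernel_method_random_sample_lower_bound
    {X : Type*} [MeasurableSpace X] (P : Measure X) [IsProbabilityMeasure P]
    {Ω : Type*} [MeasurableSpace Ω] (μ : Measure Ω) [IsProbabilityMeasure μ]
    (n N : ℕ) (K : X → X → ℝ) (xs : Fin n → Ω → X)
    (hK : ∀ᵐ ω ∂μ, ∀ j, MemLp (fun x => K x (xs j ω)) 2 P)
    (φ : Fin N → Lp ℝ 2 P) (hφ : Orthonormal ℝ φ)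
    (W : Ω → Submodule ℝ (Lp ℝ 2 P))
    (hW : ∀ ω, W ω = Submodule.span ℝ
      {f : Lp ℝ 2 P | ∃ j : Fin n, (f : X → ℝ) =ᵐ[P] fun x => K x (xs j ω)})
    (hmeas : ∀ i, Measurable fun ω => ⨅ g : W ω, ‖(g : Lp ℝ 2 P) - φ i‖ ^ 2)
    (ε : ℝ)
    (hε : (1 / (N : ℝ)) *
        ∑ i, ∫ ω, (⨅ g : W ω, ‖(g : Lp ℝ 2 P) - φ i‖ ^ 2) ∂μ ≤ ε) :
    (n : ℝ) ≥ (1 - ε) * (N : ℝ) := by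
  rcases Nat.eq_zero_or_pos N with hN | hN
  · simp [hN]
  have hN' : (0 : ℝ) < N := by exact_mod_cast hN
  set F : Fin N → Ω → ℝ := fun i ω => ⨅ g : W ω, ‖(g : Lp ℝ 2 P) - φ i‖ ^ 2 with hF
  have hF0 : ∀ i ω, 0 ≤ F i ω := fun i ω => Real.iInf_nonneg fun g => by positivity
  have hF1 : ∀ i ω, F i ω ≤ 1 := by
    intro i ω
    have : F i ω ≤ ‖((0 : W ω) : Lp ℝ 2 P) - φ i‖ ^ 2 :=
      ciInf_le ⟨0, fun y => by rintro ⟨z, rfl⟩; positivity⟩ (0 : W ω)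
    simpa [hφ.1 i] using this
  have hInt : ∀ i, Integrable (F i) μ := by
    intro i
    refine Integrable.mono' (integrable_const 1) (hmeas i).aestronglyMeasurable ?_
    filter_upwards with ω
    rw [Real.norm_of_nonneg (hF0 i ω)]
    exact hF1 i ω
  -- a.e. lower bound on the sum via the deterministic dimension lemma
  have hae : ∀ᵐ ω ∂μ, (N : ℝ) - n ≤ ∑ i, F i ω := by
    filter_upwards [hK] with ω hKω
    set g : Fin n → Lp ℝ 2 P := fun j => (hKω j).toLp _ with hg
    have hsub : W ω ≤ Submodule.span ℝ (Set.range g) := by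
      rw [hW ω]
      apply Submodule.span_le.2
      rintro f ⟨j, hj⟩
      have : f = g j := by
        apply Lp.ext (p := 2) (μ := P)
        exact hj.trans ((hKω j).coeFn_toLp).symm
      exact this ▸ Submodule.subset_span ⟨j, rfl⟩
    haveI : FiniteDimensional ℝ (Submodule.span ℝ (Set.range g)) :=
      FiniteDimensional.span_of_finite ℝ (Set.finite_range g)
    haveI : FiniteDimensional ℝ (W ω) := Submodule.finiteDimensional_of_le hsub
    haveI : CompleteSpace (W ω) := FiniteDimensional.complete ℝ _
    have hd : Module.finrank ℝ (W ω) ≤ n := by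
      calc Module.finrank ℝ (W ω) ≤ Module.finrank ℝ (Submodule.span ℝ (Set.range g)) :=
            Submodule.finrank_mono hsub
        _ ≤ Fintype.card (Fin n) := finrank_range_le_card g
        _ = n := Fintype.card_fin n
    exact aux_det (W ω) hd φ hφ
  have hsum : (N : ℝ) - n ≤ ∑ i, ∫ ω, F i ω ∂μ := by
    have h1 : ((N : ℝ) - n) = ∫ _ω, ((N : ℝ) - n) ∂μ := by simp
    rw [h1, ← integral_finset_sum _ fun i _ => hInt i]
    exact integral_mono_ae (integrable_const _) (integrable_finset_sum _ fun i _ => hInt i) hae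
  have hsum' : (N : ℝ) - n ≤ ∑ i, ∫ ω, (⨅ g : W ω, ‖(g : Lp ℝ 2 P) - φ i‖ ^ 2) ∂μ := hsum
  have h10 := mul_le_mul_of_nonneg_right hε hN'.le
  rw [one_div, inv_mul_eq_div, div_mul_cancel₀ _ hN'.ne'] at h10
  linarith
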